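/- Let λ > 0 and define f_λ : (−π/2, π/2) → ℝ by f_λ(ψ) = sin ψ · ∫₀^{ψ} (cos t)^{1/λ} dt + λ (cos ψ)^{1+1/λ}. Then for all ψ ∈ (−π/2, π/2): f_λ(ψ) − f_λ'(ψ) tan ψ = λ (cos ψ)^{(1−λ)/λ}; that is, m_λ(ψ) := f_λ(ψ) − f_λ'(ψ) tan ψ equals λ g_λ(ψ) with g_λ(ψ) = (cos ψ)^{−(λ−1)/λ}. -/

import Mathlib

open Real intervalIntegral

noncomputable section

/-- `f_λ(ψ) = sin ψ ∫₀^ψ (cos t)^{1/λ} dt + λ (cos ψ)^{1+1/λ}` -/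
def fL (lam p : ℝ) : ℝ :=
  Real.sin p * (∫ t in (0:ℝ)..p, Real.cos t ^ (1 / lam)) + lam * Real.cos p ^ (1 + 1 / lam)

theorem stmt16 (lam : ℝ) (hlam : 0 < lam) :
    ∀ p ∈ Set.Ioo (-(π / 2)) (π / 2),
      fL lam p - deriv (fL lam) p * Real.tan p = lam * Real.cos p ^ (-((lam - 1) / lam)) := by
  intro p hp
  have hcos : 0 < Real.cos p := Real.cos_pos_of_mem_Ioo hp
  have hcont : Continuous (fun t : ℝ => Real.cos t ^ (1 / lam)) := by
    rw [continuous_iff_continuousAt]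
    intro x
    exact (Real.continuousAt_rpow_const (Real.cos x) (1 / lam)
      (Or.inr (by positivity))).comp Real.continuous_cos.continuousAt
  have hF : HasDerivAt (fun u : ℝ => ∫ t in (0:ℝ)..u, Real.cos t ^ (1 / lam))
      (Real.cos p ^ (1 / lam)) p :=
    (hcont.integral_hasStrictDerivAt 0 p).hasDerivAt
  have hpow : HasDerivAt (fun u : ℝ => Real.cos u ^ (1 + 1 / lam))
      (-Real.sin p * (1 + 1 / lam) * Real.cos p ^ (1 + 1 / lam - 1)) p :=
    (Real.hasDerivAt_cos p).rpow_const (Or.inl hcos.ne')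
  have hf : HasDerivAt (fL lam)
      (Real.cos p * (∫ t in (0:ℝ)..p, Real.cos t ^ (1 / lam)) +
        Real.sin p * Real.cos p ^ (1 / lam) +
        lam * (-Real.sin p * (1 + 1 / lam) * Real.cos p ^ (1 + 1 / lam - 1))) p := by
    exact ((Real.hasDerivAt_sin p).mul hF).add (hpow.const_mul lam)
  rw [hf.deriv]
  have h1 : (1 : ℝ) + 1 / lam - 1 = 1 / lam := by ring
  have h2 : -((lam - 1) / lam) = 1 / lam - 1 := by field_simp; ring
  have h3 : Real.cos p ^ (1 + 1 / lam) = Real.cos p * Real.cos p ^ (1 / lam) := by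
    rw [Real.rpow_add hcos, Real.rpow_one]
  have h4 : Real.cos p ^ (-((lam - 1) / lam)) = Real.cos p ^ (1 / lam) / Real.cos p := by
    rw [h2, Real.rpow_sub hcos, Real.rpow_one]
  have hsc : Real.sin p ^ 2 + Real.cos p ^ 2 = 1 := Real.sin_sq_add_cos_sq p
  rw [Real.tan_eq_sin_div_cos, fL, h1, h3, h4]
  field_simp
  linear_combination (lam * Real.cos p ^ (1 / lam)) * hsc
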